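/- Let M be a K×K Hermitian positive definite complex matrix and D a diagonal invertible complex matrix. If A is upper unitriangular and M D A D⁻¹ is lower triangular, then A = D⁻¹ U⁻¹ D, where M = Uᴴ Λ U is the LDL decomposition of M with U upper unitriangular and Λ diagonal positive. In particular, such A is unique. -/
import Mathlib


open Matrix ComplexOrder

/-- An upper unitriangular matrix: upper triangular with ones on the diagonal. -/
def UpperUnitri {K : ℕ} (A : Matrix (Fin K) (Fin K) ℂ) : Prop :=
  (∀ i j : Fin K, j < i → A i j = 0) ∧ ∀ i : Fin K, A i i = 1

/-- if A is upper unitriangular and M D A D⁻¹ is lower triangular,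
then A = D⁻¹ U⁻¹ D, where M = Uᴴ Λ U is the LDL decomposition; in particular
such A is unique. -/
theorem stmt_3 {K : ℕ} (M U Λ D A : Matrix (Fin K) (Fin K) ℂ) (hM : M.PosDef)
    (hU : UpperUnitri U) (hΛ : Λ.IsDiag)
    (hpos : ∀ i : Fin K, ∃ r : ℝ, 0 < r ∧ Λ i i = (r : ℂ))
    (hdec : M = Uᴴ * Λ * U)
    (hD : D.IsDiag) (hDinv : IsUnit D)
    (hA : UpperUnitri A)
    (hlow : ∀ i j : Fin K, i < j → (M * D * A * D⁻¹) i j = 0) :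
    A = D⁻¹ * U⁻¹ * D := by
  classical
  obtain ⟨hUlow, hUdiag⟩ := hU
  obtain ⟨hAlow, hAdiag⟩ := hA
  have hDdet : IsUnit D.det := (Matrix.isUnit_iff_isUnit_det D).mp hDinv
  set d := D.diag with hd
  have hDD : D = Matrix.diagonal d := hD.diagonal_diag.symm
  have hDne : ∀ i, d i ≠ 0 := by
    intro i hi
    have : D.det = 0 := by
      rw [hDD, Matrix.det_diagonal]
      exact Finset.prod_eq_zero (Finset.mem_univ i) hi
    exact hDdet.ne_zero this
  have hDinvD : D⁻¹ = Matrix.diagonal (fun i => (d i)⁻¹) := by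
    apply Matrix.inv_eq_right_inv
    rw [hDD, Matrix.diagonal_mul_diagonal, ← Matrix.diagonal_one]
    exact congrArg Matrix.diagonal (funext fun i => mul_inv_cancel₀ (hDne i))
  -- B := D * A * D⁻¹
  set B := D * A * D⁻¹ with hB
  have hBentry : ∀ i j, B i j = d i * A i j * (d j)⁻¹ := by
    intro i j
    rw [hB, hDinvD, hDD, Matrix.mul_diagonal, Matrix.diagonal_mul]
  have hBlow : ∀ i j : Fin K, j < i → B i j = 0 := by
    intro i j h
    rw [hBentry, hAlow i j h, mul_zero, zero_mul]
  have hBdiag : ∀ i, B i i = 1 := by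
    intro i
    rw [hBentry, hAdiag, mul_one, mul_inv_cancel₀ (hDne i)]
  -- V := U * B is upper unitriangular
  set V := U * B with hV
  have hVlow : ∀ i j : Fin K, j < i → V i j = 0 := by
    intro i j h
    rw [hV, Matrix.mul_apply]
    apply Finset.sum_eq_zero
    intro k _
    rcases lt_or_ge k i with hk | hk
    · rw [hUlow i k hk, zero_mul]
    · rw [hBlow k j (lt_of_lt_of_le h hk), mul_zero]
  have hVdiag : ∀ i, V i i = 1 := by
    intro i
    rw [hV, Matrix.mul_apply]
    rw [Finset.sum_eq_single i]
    · rw [hUdiag, hBdiag, one_mul]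
    · intro k _ hk
      rcases lt_or_gt_of_ne hk with h | h
      · rw [hUlow i k h, zero_mul]
      · rw [hBlow k i h, mul_zero]
    · intro h; exact absurd (Finset.mem_univ i) h
  -- U has determinant 1, so invertible
  have hUtri : U.BlockTriangular id := fun i j h => hUlow i j h
  have hUdet : U.det = 1 := by
    rw [Matrix.det_of_upperTriangular hUtri]
    simp [hUdiag]
  have hUHtri : Uᴴ.BlockTriangular (OrderDual.toDual : Fin K → (Fin K)ᵒᵈ) := by
    intro i j h
    have hij : i < j := h
    simp [Matrix.conjTranspose_apply, hUlow j i hij]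
  have hUHdet : IsUnit Uᴴ.det := by
    rw [Matrix.det_conjTranspose, hUdet]
    simp
  have : Invertible Uᴴ := (Matrix.isUnit_iff_isUnit_det Uᴴ).mpr hUHdet |>.invertible
  have hUHinvTri : (Uᴴ)⁻¹.BlockTriangular (OrderDual.toDual : Fin K → (Fin K)ᵒᵈ) :=
    Matrix.blockTriangular_inv_of_blockTriangular hUHtri
  -- M * B is lower triangular
  have hMBtri : (M * B).BlockTriangular (OrderDual.toDual : Fin K → (Fin K)ᵒᵈ) := by
    intro i j h
    have hij : (i : Fin K) < j := h
    have := hlow i j hij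
    rwa [hB, ← Matrix.mul_assoc, ← Matrix.mul_assoc]
  -- Λ * V = (Uᴴ)⁻¹ * (M * B)
  have hLV : Λ * V = (Uᴴ)⁻¹ * (M * B) := by
    have hMB : M * B = Uᴴ * (Λ * V) := by
      rw [hdec, hV]
      simp only [Matrix.mul_assoc]
    rw [hMB, ← Matrix.mul_assoc (Uᴴ)⁻¹, Matrix.inv_mul_of_invertible, Matrix.one_mul]
  have hLVtri : (Λ * V).BlockTriangular (OrderDual.toDual : Fin K → (Fin K)ᵒᵈ) := by
    rw [hLV]
    exact hUHinvTri.mul hMBtri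
  -- hence V is lower triangular too
  have hVupper : ∀ i j : Fin K, i < j → V i j = 0 := by
    intro i j h
    have h0 : (Λ * V) i j = 0 := hLVtri h
    have hΛD : Λ = Matrix.diagonal Λ.diag := hΛ.diagonal_diag.symm
    rw [hΛD, Matrix.diagonal_mul] at h0
    obtain ⟨r, hr, hri⟩ := hpos i
    have hne : Λ.diag i ≠ 0 := by
      rw [Matrix.diag_apply, hri]
      exact_mod_cast Complex.ofReal_ne_zero.mpr hr.ne'
    exact (mul_eq_zero.mp h0).resolve_left hne
  -- V = 1
  have hV1 : V = 1 := by
    ext i j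
    rcases lt_trichotomy i j with h | h | h
    · rw [hVupper i j h, Matrix.one_apply_ne h.ne]
    · subst h; rw [hVdiag, Matrix.one_apply_eq]
    · rw [hVlow i j h, Matrix.one_apply_ne h.ne']
  have hUinv : U⁻¹ = B := Matrix.inv_eq_right_inv hV1
  rw [hUinv, hB]
  rw [← Matrix.mul_assoc, ← Matrix.mul_assoc, Matrix.nonsing_inv_mul D hDdet,
    Matrix.one_mul, Matrix.mul_assoc, Matrix.nonsing_inv_mul D hDdet, Matrix.mul_one]
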